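/- Let X be a nonempty compact metric space, μ a finite Borel measure on X, and f, g : X → ℝ continuous. Then |∫_X normalize(f) dμ − ∫_X normalize(g) dμ| ≤ osc(f − g) · μ(X). -/
import Mathlib


open MeasureTheory Set

/-- The (attained) minimum of `f` on a nonempty compact space. -/
noncomputable def minF {X : Type*} (f : X → ℝ) : ℝ := sInf (Set.range f)

/-- The (attained) maximum of `f` on a nonempty compact space. -/
noncomputable def maxF {X : Type*} (f : X → ℝ) : ℝ := sSup (Set.range f)

/-- The oscillation `max f - min f`. -/
noncomputable def oscF {X : Type*} (f : X → ℝ) : ℝ := maxF f - minF f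

/-- `normalize f = f - min f`. -/
noncomputable def normF {X : Type*} (f : X → ℝ) : X → ℝ := fun x => f x - minF f

/-- The minimizer set of `f`. -/
def argminF {X : Type*} (f : X → ℝ) : Set X := {x | f x = minF f}

/-- The maximizer set of `f`. -/
def argmaxF {X : Type*} (f : X → ℝ) : Set X := {x | f x = maxF f}

lemma minF_le' {X : Type*} [TopologicalSpace X] [CompactSpace X] [Nonempty X]
    {f : X → ℝ} (hf : Continuous f) (x : X) : minF f ≤ f x :=
  csInf_le (isCompact_range hf).bddBelow (mem_range_self x)

lemma le_maxF' {X : Type*} [TopologicalSpace X] [CompactSpace X] [Nonempty X]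
    {f : X → ℝ} (hf : Continuous f) (x : X) : f x ≤ maxF f :=
  le_csSup (isCompact_range hf).bddAbove (mem_range_self x)

lemma exists_min' {X : Type*} [TopologicalSpace X] [CompactSpace X] [Nonempty X]
    {f : X → ℝ} (hf : Continuous f) : ∃ x, f x = minF f :=
  (isCompact_range hf).sInf_mem (range_nonempty f)

theorem stmt_4 {X : Type*} [MetricSpace X] [CompactSpace X] [Nonempty X]
    [MeasurableSpace X] [BorelSpace X]
    (μ : Measure X) [IsFiniteMeasure μ]
    (f g : X → ℝ) (hf : Continuous f) (hg : Continuous g) :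
    |(∫ x, normF f x ∂μ) - ∫ x, normF g x ∂μ| ≤
      oscF (fun x => f x - g x) * (μ Set.univ).toReal := by
  have hfg : Continuous (fun x => f x - g x) := hf.sub hg
  set d : X → ℝ := fun x => f x - g x with hd
  -- bounds on minF f - minF g
  obtain ⟨xg, hxg⟩ := exists_min' hg
  obtain ⟨xf, hxf⟩ := exists_min' hf
  have h1 : minF f - minF g ≤ maxF d := by
    have h0 : minF f ≤ f xg := minF_le' hf xg
    have h2 : f xg - g xg ≤ maxF d := le_maxF' hfg xg
    linarith [hxg]
  have h2 : minF d ≤ minF f - minF g := by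
    have h0 : minF d ≤ f xf - g xf := minF_le' hfg xf
    have h3 : minF g ≤ g xf := minF_le' hg xf
    linarith [hxf]
  -- pointwise bound
  have hpt : ∀ x, ‖normF f x - normF g x‖ ≤ oscF d := by
    intro x
    have e : normF f x - normF g x = d x - (minF f - minF g) := by
      simp only [normF, hd]; ring
    rw [e, Real.norm_eq_abs, abs_le, oscF]
    constructor
    · have := minF_le' hfg x
      linarith
    · have := le_maxF' hfg x
      linarith
  -- integrability
  have hif : Integrable (normF f) μ := integrableOn_univ.mp ((hf.sub continuous_const).continuousOn.integrableOn_compact isCompact_univ)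
  have hig : Integrable (normF g) μ := integrableOn_univ.mp ((hg.sub continuous_const).continuousOn.integrableOn_compact isCompact_univ)
  rw [← integral_sub hif hig]
  calc |∫ x, (normF f x - normF g x) ∂μ|
      ≤ oscF d * (μ Set.univ).toReal := by
        rw [← Real.norm_eq_abs]
        exact norm_integral_le_of_norm_le_const (Filter.Eventually.of_forall hpt)
    _ = oscF (fun x => f x - g x) * (μ Set.univ).toReal := rfl
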